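/- Suppose C₁ ≥ C₂ > 0 and C < 0. Let p₁ < p₂ in (0,1), and for i = 1,2 let x*ᵢ ∈ (−1,0) satisfy J(x*ᵢ; pᵢ) = 0, where J(·; p₂) is strictly increasing on [−1,0]. Then x*₂ < x*₁: the disclosure threshold is strictly decreasing in the probability p that the manager becomes informed. -/

import Mathlib

open MeasureTheory

/-- The disclosure threshold is strictly decreasing in the probability p
that the manager becomes informed: if p₁ < p₂ and x*ᵢ ∈ (−1,0) are roots of
J(·; pᵢ) = 0, with J(·; p₂) strictly increasing on [−1,0], then x*₂ < x*₁. -/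
theorem stmt_17 (f F : ℝ → ℝ)
    (hf_nonneg : ∀ x, 0 ≤ f x)
    (hf_supp : ∀ x : ℝ, x ∉ Set.Icc (-1 : ℝ) 1 → f x = 0)
    (hf_total : (∫ x in (-1 : ℝ)..1, f x) = 1)
    (hf_symm : ∀ x, f x = f (-x))
    (hf_cont : Continuous f)
    (hf_pos : ∀ x ∈ Set.Ioo (-1 : ℝ) 1, 0 < f x)
    (hF : ∀ x, F x = ∫ t in (-1 : ℝ)..x, f t)
    (C₁ C₂ C : ℝ) (J : ℝ → ℝ → ℝ)
    (hC₁₂ : C₂ ≤ C₁) (hC₂ : 0 < C₂) (hC : C < 0)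
    (hJ : ∀ x p : ℝ, J x p = p * C₁ * (∫ t in (-1 : ℝ)..x, F t)
      + p * (C₂ - C₁) * x * F x + (1 - p) * (C₂ * x - C))
    (p₁ p₂ x₁ x₂ : ℝ)
    (hp₁ : p₁ ∈ Set.Ioo (0 : ℝ) 1) (hp₂ : p₂ ∈ Set.Ioo (0 : ℝ) 1) (hpp : p₁ < p₂)
    (hx₁ : x₁ ∈ Set.Ioo (-1 : ℝ) 0) (hx₂ : x₂ ∈ Set.Ioo (-1 : ℝ) 0)
    (hroot₁ : J x₁ p₁ = 0) (hroot₂ : J x₂ p₂ = 0)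
    (hmono : StrictMonoOn (fun x => J x p₂) (Set.Icc (-1 : ℝ) 0)) :
    x₂ < x₁ := by

  obtain ⟨hx₁l, hx₁r⟩ := hx₁
  obtain ⟨hx₂l, hx₂r⟩ := hx₂
  obtain ⟨hp₁0, hp₁1⟩ := hp₁
  obtain ⟨hp₂0, hp₂1⟩ := hp₂
  have hC₁ : 0 < C₁ := lt_of_lt_of_le hC₂ hC₁₂
  -- F is continuous
  have hFeq : F = fun x => ∫ t in (-1 : ℝ)..x, f t := funext hF
  have hFcont : Continuous F := by
    rw [hFeq]
    exact intervalIntegral.continuous_primitive (fun a b => hf_cont.intervalIntegrable a b) (-1)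
  -- F positive on (-1, 0]
  have hFpos : ∀ x : ℝ, -1 < x → x ≤ 0 → 0 < F x := by
    intro x hx hx0
    rw [hF]
    apply intervalIntegral.intervalIntegral_pos_of_pos_on (hf_cont.intervalIntegrable _ _)
    · intro t ⟨ht1, ht2⟩
      exact hf_pos t ⟨ht1, lt_of_lt_of_le ht2 (by linarith)⟩
    · exact hx
  -- integral of F is positive
  have hIpos : 0 < ∫ t in (-1 : ℝ)..x₁, F t := by
    apply intervalIntegral.intervalIntegral_pos_of_pos_on (hFcont.intervalIntegrable _ _)
    · intro t ⟨ht1, ht2⟩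
      exact hFpos t ht1 (by linarith)
    · exact hx₁l
  set A : ℝ := C₁ * (∫ t in (-1 : ℝ)..x₁, F t) + (C₂ - C₁) * x₁ * F x₁ with hA
  set B : ℝ := C₂ * x₁ - C with hB
  have hApos : 0 < A := by
    have h1 : 0 < C₁ * ∫ t in (-1 : ℝ)..x₁, F t := mul_pos hC₁ hIpos
    have h2 : 0 ≤ (C₂ - C₁) * x₁ * F x₁ := by
      have : 0 ≤ (C₂ - C₁) * x₁ := by nlinarith [hx₁r, hC₁₂]
      exact mul_nonneg this (le_of_lt (hFpos x₁ hx₁l (le_of_lt hx₁r)))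
    linarith
  have hJx₁ : ∀ p : ℝ, J x₁ p = p * A + (1 - p) * B := by
    intro p; rw [hJ, hA, hB]; ring
  have hroot₁' : p₁ * A + (1 - p₁) * B = 0 := by rw [← hJx₁]; exact hroot₁
  have hBneg : B < 0 := by nlinarith [mul_pos hp₁0 hApos]
  have hJpos : 0 < J x₁ p₂ := by
    rw [hJx₁]
    nlinarith [mul_pos (sub_pos.2 hpp) (sub_pos.2 (lt_trans hBneg hApos))]
  by_contra h
  push_neg at h
  have := hmono.monotoneOn ⟨le_of_lt hx₁l, le_of_lt hx₁r⟩ ⟨le_of_lt hx₂l, le_of_lt hx₂r⟩ h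
  rw [hroot₂] at this
  linarith
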